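/- Let 0<p<∞, φ∈𝒢_p(𝔻), φ(1)=1, sup_k φ(2^k)=∞. Then m_{φ,p}(ℤ^d) is separable if, and only if, lim_{k→∞} 2^{−kd/p}φ(2^k) > 0 (equivalently m_{φ,p}=ℓ_p). In particular, if the limit is 0 then m_{φ,p}(ℤ^d) contains an uncountable family of elements with pairwise distances at least 1. -/

import Mathlib

open ENNReal Filter

noncomputable section

/-- `Q_{0,k} ⊂ Q_{-j,m}` for dyadic cubes `Q_{-j,m} = 2^j([0,1)^d + m)`. -/
def inCube (d j : ℕ) (m k : Fin d → ℤ) : Prop :=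
  ∀ i, 2 ^ j * m i ≤ k i ∧ k i < 2 ^ j * (m i + 1)

/-- the local quantity `(Σ_{k : Q_{0,k} ⊂ Q_{-j,m}} |λ_k|^p)^{1/p}`, in `ℝ≥0∞`. -/
def localSum (d : ℕ) (p : ℝ) (j : ℕ) (m : Fin d → ℤ)
    (lam : (Fin d → ℤ) → ℂ) : ℝ≥0∞ :=
  (∑' k : {k : Fin d → ℤ // inCube d j m k}, ENNReal.ofReal ‖lam k.1‖ ^ p) ^ (1 / p)

/-- quasi-norm of the generalised Morrey sequence space `m_{φ,p}(ℤ^d)`;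
`φ j` stands for `φ(2^j)`. -/
def mNorm (d : ℕ) (p : ℝ) (φ : ℕ → ℝ) (lam : (Fin d → ℤ) → ℂ) : ℝ≥0∞ :=
  ⨆ (j : ℕ) (m : Fin d → ℤ),
    ENNReal.ofReal (φ j) * (2 : ℝ≥0∞) ^ (-((j : ℝ) * d) / p) * localSum d p j m lam

def ellpNorm (d : ℕ) (p : ℝ) (lam : (Fin d → ℤ) → ℂ) : ℝ≥0∞ :=
  (∑' k : Fin d → ℤ, ENNReal.ofReal ‖lam k‖ ^ p) ^ (1 / p)

def linftyNorm (d : ℕ) (lam : (Fin d → ℤ) → ℂ) : ℝ≥0∞ :=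
  ⨆ k : Fin d → ℤ, ENNReal.ofReal ‖lam k‖

/-- the class `𝒢_p(𝔻)`: `φ(2^k)` is positive, nondecreasing and
`2^{-kd/p} φ(2^k)` is nonincreasing. -/
def Gp (d : ℕ) (p : ℝ) (φ : ℕ → ℝ) : Prop :=
  (∀ k, 0 < φ k) ∧
  ∀ j k : ℕ, j ≤ k → φ j ≤ φ k ∧ φ k ≤ φ j * 2 ^ (((k : ℝ) - j) * d / p)


-- ======================= auxiliary lemmas =======================
section aux
open Classical

/-- real weight `w(j) = φ(2^j) 2^{-jd/p}` -/
def w (d : ℕ) (p : ℝ) (φ : ℕ → ℝ) (j : ℕ) : ℝ := φ j * 2 ^ (-((j : ℝ) * d) / p)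

lemma w_pos (d : ℕ) (p : ℝ) (φ : ℕ → ℝ) (hφ : ∀ k, 0 < φ k) (j : ℕ) : 0 < w d p φ j :=
  mul_pos (hφ j) (Real.rpow_pos_of_pos two_pos _)

lemma w_zero (d : ℕ) (p : ℝ) (φ : ℕ → ℝ) (hφ1 : φ 0 = 1) : w d p φ 0 = 1 := by
  simp [w, hφ1]

lemma w_antitone (d : ℕ) (p : ℝ) (φ : ℕ → ℝ) (hGp : Gp d p φ) : Antitone (w d p φ) := by
  intro j k hjk
  have h2 : (0:ℝ) < 2 ^ (-((k : ℝ) * d) / p) := Real.rpow_pos_of_pos two_pos _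
  have h3 : φ k * 2 ^ (-((k : ℝ) * d) / p) ≤
      (φ j * 2 ^ (((k : ℝ) - j) * d / p)) * 2 ^ (-((k : ℝ) * d) / p) :=
    mul_le_mul_of_nonneg_right (hGp.2 j k hjk).2 h2.le
  calc w d p φ k ≤ (φ j * 2 ^ (((k : ℝ) - j) * d / p)) * 2 ^ (-((k : ℝ) * d) / p) := h3
    _ = φ j * 2 ^ (((k : ℝ) - j) * d / p + -((k : ℝ) * d) / p) := by
        rw [Real.rpow_add two_pos]; ring
    _ = w d p φ j := by
        rw [w]; congr 1; congr 1; ring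

lemma wE_eq (d : ℕ) (p : ℝ) (φ : ℕ → ℝ) (j : ℕ) (hφ : ∀ k, 0 < φ k) :
    ENNReal.ofReal (φ j) * (2 : ℝ≥0∞) ^ (-((j : ℝ) * d) / p) = ENNReal.ofReal (w d p φ j) := by
  rw [w, ENNReal.ofReal_mul (hφ j).le]
  congr 1
  rw [← ENNReal.ofReal_rpow_of_pos two_pos, ENNReal.ofReal_ofNat]

lemma inCube_zero {d : ℕ} (m k : Fin d → ℤ) : inCube d 0 m k ↔ k = m := by
  simp only [inCube, pow_zero, one_mul, funext_iff]
  constructor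
  · intro h i; exact le_antisymm (Int.lt_add_one_iff.mp (h i).2) (h i).1
  · intro h i; rw [h i]; exact ⟨le_rfl, by omega⟩

lemma tsum_cube_zero {d : ℕ} (m : Fin d → ℤ) (f : (Fin d → ℤ) → ℝ≥0∞) :
    (∑' k : {k : Fin d → ℤ // inCube d 0 m k}, f k.1) = f m := by
  have hu : ∀ b : {k : Fin d → ℤ // inCube d 0 m k}, b = ⟨m, (inCube_zero m m).mpr rfl⟩ :=
    fun b => Subtype.ext ((inCube_zero m b.1).mp b.2)
  calc (∑' k : {k : Fin d → ℤ // inCube d 0 m k}, f k.1)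
      = f (⟨m, (inCube_zero m m).mpr rfl⟩ : {k : Fin d → ℤ // inCube d 0 m k}).1 :=
        tsum_eq_single _ (fun b hb => absurd (hu b) hb)
    _ = f m := rfl

lemma rpowRpowInv {x : ℝ≥0∞} {p : ℝ} (hp : p ≠ 0) : (x ^ p) ^ (1/p) = x := by
  rw [← ENNReal.rpow_mul, mul_one_div, div_self hp, ENNReal.rpow_one]

lemma localSum_zero {d : ℕ} {p : ℝ} (hp : 0 < p) (m : Fin d → ℤ) (lam : (Fin d → ℤ) → ℂ) :
    localSum d p 0 m lam = ENNReal.ofReal ‖lam m‖ := by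
  rw [localSum, tsum_cube_zero m (fun k => ENNReal.ofReal ‖lam k‖ ^ p), rpowRpowInv hp.ne']

lemma tsum_cube_le {d : ℕ} (j : ℕ) (m : Fin d → ℤ) (f : (Fin d → ℤ) → ℝ≥0∞) :
    (∑' k : {k : Fin d → ℤ // inCube d j m k}, f k.1) ≤ ∑' k, f k :=
  le_trans (le_of_eq (tsum_subtype {k | inCube d j m k} f))
    (ENNReal.tsum_le_tsum fun k => Set.indicator_le_self _ _ k)

lemma localSum_le_ellp {d : ℕ} {p : ℝ} (hp : 0 < p) (j : ℕ) (m : Fin d → ℤ)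
    (lam : (Fin d → ℤ) → ℂ) : localSum d p j m lam ≤ ellpNorm d p lam :=
  ENNReal.rpow_le_rpow (tsum_cube_le j m _) (by positivity)

section mm
variable {d : ℕ} {p : ℝ} {φ : ℕ → ℝ} {lam : (Fin d → ℤ) → ℂ}

lemma term_le_mNorm (j : ℕ) (m : Fin d → ℤ) :
    ENNReal.ofReal (φ j) * (2 : ℝ≥0∞) ^ (-((j : ℝ) * d) / p) * localSum d p j m lam
      ≤ mNorm d p φ lam :=
  le_iSup₂ (f := fun j m => ENNReal.ofReal (φ j) * (2 : ℝ≥0∞) ^ (-((j : ℝ) * d) / p)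
    * localSum d p j m lam) j m

lemma norm_le_mNorm (hp : 0 < p) (hφ1 : φ 0 = 1) (k : Fin d → ℤ) :
    ENNReal.ofReal ‖lam k‖ ≤ mNorm d p φ lam := by
  have := term_le_mNorm (p := p) (φ := φ) (lam := lam) 0 k
  rw [localSum_zero hp k lam, hφ1] at this
  simpa using this

lemma mNorm_le_ellp (hp : 0 < p) (hGp : Gp d p φ) (hφ1 : φ 0 = 1) :
    mNorm d p φ lam ≤ ellpNorm d p lam := by
  refine iSup₂_le fun j m => ?_
  rw [wE_eq d p φ j hGp.1]
  calc ENNReal.ofReal (w d p φ j) * localSum d p j m lam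
      ≤ 1 * ellpNorm d p lam := by
        refine mul_le_mul ?_ (localSum_le_ellp hp j m lam) zero_le zero_le
        rw [show (1:ℝ≥0∞) = ENNReal.ofReal (w d p φ 0) by rw [w_zero d p φ hφ1]; simp]
        exact ENNReal.ofReal_le_ofReal (w_antitone d p φ hGp (Nat.zero_le j))
    _ = ellpNorm d p lam := one_mul _
end mm
def Jfun (g : ℕ → ℕ) : ℕ → ℕ := fun n => Nat.rec (g 0) (fun n Jn => max (Jn + 1) (g (n+1))) n
def cfun (g : ℕ → ℕ) : ℕ → ℤ := fun n => Nat.rec 0 (fun n cn => cn + 2 ^ (Jfun g (n+1))) n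

lemma construction (d : ℕ) (hd : 0 < d) (p : ℝ) (hp : 0 < p)
    (φ : ℕ → ℝ) (hGp : Gp d p φ) (hφ1 : φ 0 = 1)
    (htend : Tendsto (w d p φ) atTop (nhds 0)) :
    ∃ lamF : Set ℕ → ((Fin d → ℤ) → ℂ),
      (∀ A, mNorm d p φ (lamF A) < ⊤) ∧
      (∀ A B : Set ℕ, A ≠ B → ∃ k, ‖(lamF A - lamF B) k‖ = 1) := by
  classical
  -- choose thresholds
  have hex : ∀ n : ℕ, ∃ j : ℕ, w d p φ j ≤ (1/(n+1) : ℝ) ^ (1/p) := by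
    intro n
    have hε : (0:ℝ) < (1/(n+1) : ℝ) ^ (1/p) := by positivity
    exact (htend.eventually_lt_const hε).exists.imp fun j hj => hj.le
  choose g hg using hex
  -- strictly monotone J
  set J : ℕ → ℕ := Jfun g with hJ
  have hJsucc : ∀ n, J (n+1) = max (J n + 1) (g (n+1)) := fun n => rfl
  have hJmono : StrictMono J := strictMono_nat_of_lt_succ fun n => by
    rw [hJsucc]; exact lt_of_lt_of_le (Nat.lt_succ_self _) (le_max_left _ _)
  have hJg : ∀ n, g n ≤ J n := by
    intro n; cases n with
    | zero => exact le_rfl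
    | succ n => rw [hJsucc]; exact le_max_right _ _
  have hJw : ∀ n, w d p φ (J n) ≤ (1/(n+1) : ℝ) ^ (1/p) :=
    fun n => le_trans (w_antitone d p φ hGp (hJg n)) (hg n)
  -- the points
  set c : ℕ → ℤ := cfun g with hc
  have hcsucc : ∀ n, c (n+1) = c n + 2 ^ (J (n+1)) := fun n => rfl
  have hcmono : Monotone c := monotone_nat_of_le_succ fun n => by
    rw [hcsucc]; exact le_add_of_nonneg_right (by positivity)
  have hckey : ∀ a b : ℕ, a < b → c a + 2 ^ (J b) ≤ c b := by
    intro a b hab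
    induction b with
    | zero => omega
    | succ b ih =>
      rw [hcsucc]
      have : c a ≤ c b := hcmono (Nat.lt_succ_iff.mp hab)
      omega
  have hcstrict : StrictMono c := strictMono_nat_of_lt_succ fun n => by
    rw [hcsucc]; have : (0:ℤ) < 2 ^ (J (n+1)) := by positivity
    omega
  let pt : ℕ → (Fin d → ℤ) := fun n _ => c n
  have hptinj : Function.Injective pt := by
    intro a b hab
    exact hcstrict.injective (congrFun hab ⟨0, hd⟩)
  set lamF : Set ℕ → ((Fin d → ℤ) → ℂ) :=
    fun A => Set.indicator (pt '' A) (fun _ => 1) with hlamF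
  refine ⟨lamF, ?_, ?_⟩
  · -- finiteness
    intro A
    have key : ∀ (j : ℕ) (m : Fin d → ℤ),
        ENNReal.ofReal (φ j) * (2 : ℝ≥0∞) ^ (-((j : ℝ) * d) / p) * localSum d p j m (lamF A)
          ≤ (2 : ℝ≥0∞) ^ (1/p) := by
      intro j m
      rw [wE_eq d p φ j hGp.1]
      set B : Finset ℕ := (Finset.range j).filter (fun b => J b < j) with hB
      -- the least index whose point is in the cube
      by_cases hcube : ∃ n, inCube d j m (pt n)
      case neg =>
        -- empty cube: localSum = 0
        have h0 : localSum d p j m (lamF A) = 0 := by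
          rw [localSum]
          have : (∑' k : {k : Fin d → ℤ // inCube d j m k},
              ENNReal.ofReal ‖lamF A k.1‖ ^ p) = 0 := by
            rw [ENNReal.tsum_eq_zero]
            rintro ⟨k, hk⟩
            have hk0 : lamF A k = 0 := by
              apply Set.indicator_of_notMem
              rintro ⟨n, -, rfl⟩
              exact hcube ⟨n, hk⟩
            simp [hk0, ENNReal.zero_rpow_of_pos hp]
          rw [this, ENNReal.zero_rpow_of_pos (by positivity)]
        rw [h0, mul_zero]; exact zero_le
      case pos =>
        set e := Nat.find hcube with he
        set E : Finset (Fin d → ℤ) := (insert e B).image pt with hE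
        -- tsum bound
        have hsum : (∑' k : {k : Fin d → ℤ // inCube d j m k},
            ENNReal.ofReal ‖lamF A k.1‖ ^ p) ≤ (E.card : ℝ≥0∞) := by
          have hle : (∑' k : {k : Fin d → ℤ // inCube d j m k},
              ENNReal.ofReal ‖lamF A k.1‖ ^ p)
                ≤ ∑' k : Fin d → ℤ, (if k ∈ E then (1:ℝ≥0∞) else 0) := by
            refine Summable.tsum_le_tsum_of_inj Subtype.val Subtype.val_injective
              (fun _ _ => zero_le) ?_ ENNReal.summable ENNReal.summable
            rintro ⟨k, hk⟩
            by_cases hmem : k ∈ pt '' A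
            case neg =>
              have hk0 : lamF A k = 0 := Set.indicator_of_notMem hmem _
              simp [hk0, ENNReal.zero_rpow_of_pos hp]
            case pos =>
              obtain ⟨n, hnA, rfl⟩ := hmem
              have hn : n ∈ insert e B := by
                by_cases hne : n = e
                · exact hne ▸ Finset.mem_insert_self _ _
                · refine Finset.mem_insert_of_mem ?_
                  have hen : e < n := lt_of_le_of_ne (Nat.find_le hk) (Ne.symm hne)
                  have hce : inCube d j m (pt e) := Nat.find_spec hcube
                  have hJn : J n < j := by
                    by_contra hjJ
                    push_neg at hjJ
                    have h1 : c e + 2 ^ (J n) ≤ c n := hckey e n hen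
                    have h2 : (2:ℤ) ^ j ≤ 2 ^ (J n) := pow_le_pow_right₀ one_le_two hjJ
                    have h3 := (hce ⟨0, hd⟩).1
                    have h4 := (hk ⟨0, hd⟩).2
                    have h5 : (2:ℤ)^j * (m ⟨0, hd⟩ + 1) = 2^j * m ⟨0, hd⟩ + 2^j := by ring
                    simp only [pt] at h1 h3 h4
                    omega
                  have hnj : n < j := lt_of_le_of_lt hJmono.le_apply hJn
                  exact Finset.mem_filter.mpr ⟨Finset.mem_range.mpr hnj, hJn⟩
              have hval : lamF A (pt n) = 1 :=
                Set.indicator_of_mem (Set.mem_image_of_mem pt hnA) _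
              rw [if_pos (Finset.mem_image_of_mem pt hn), hval]
              simp [ENNReal.one_rpow]
          calc _ ≤ ∑' k : Fin d → ℤ, (if k ∈ E then (1:ℝ≥0∞) else 0) := hle
            _ = ∑ k ∈ E, (if k ∈ E then (1:ℝ≥0∞) else 0) :=
                tsum_eq_sum (fun k hk => if_neg hk)
            _ = (E.card : ℝ≥0∞) := by
                rw [Finset.sum_ite_of_true (fun _ h => h), Finset.sum_const, nsmul_eq_mul, mul_one]
        -- weight bound
        have hwp1 : ENNReal.ofReal (w d p φ j) ^ p ≤ 1 := by
          refine ENNReal.rpow_le_one ?_ hp.le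
          rw [show (1:ℝ≥0∞) = ENNReal.ofReal (w d p φ 0) by rw [w_zero d p φ hφ1]; simp]
          exact ENNReal.ofReal_le_ofReal (w_antitone d p φ hGp (Nat.zero_le j))
        have hwB : ENNReal.ofReal (w d p φ j) ^ p * (B.card : ℝ≥0∞) ≤ 1 := by
          rcases B.eq_empty_or_nonempty with hBe | hBne
          · simp [hBe]
          · set b := B.max' hBne with hb
            have hbB : b ∈ B := B.max'_mem hBne
            have hJb : J b < j := (Finset.mem_filter.mp hbB).2
            have hwj : w d p φ j ≤ (1/((b:ℝ)+1)) ^ (1/p) :=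
              le_trans (w_antitone d p φ hGp hJb.le) (hJw b)
            have hcard : B.card ≤ b + 1 := by
              have : B ⊆ Finset.range (b+1) := fun x hx =>
                Finset.mem_range.mpr (Nat.lt_succ_iff.mpr (B.le_max' x hx))
              simpa using Finset.card_le_card this
            have hwjp : ENNReal.ofReal (w d p φ j) ^ p ≤ ENNReal.ofReal (1/((b:ℝ)+1)) := by
              calc ENNReal.ofReal (w d p φ j) ^ p
                  ≤ ENNReal.ofReal ((1/((b:ℝ)+1)) ^ (1/p)) ^ p := by
                    exact ENNReal.rpow_le_rpow (ENNReal.ofReal_le_ofReal hwj) hp.le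
                _ = ENNReal.ofReal (((1/((b:ℝ)+1)) ^ (1/p)) ^ p) :=
                    ENNReal.ofReal_rpow_of_pos (by positivity)
                _ = ENNReal.ofReal (1/((b:ℝ)+1)) := by
                    rw [← Real.rpow_mul (by positivity), one_div_mul_cancel hp.ne',
                      Real.rpow_one]
            calc ENNReal.ofReal (w d p φ j) ^ p * (B.card : ℝ≥0∞)
                ≤ ENNReal.ofReal (1/((b:ℝ)+1)) * ((b:ℝ≥0∞)+1) := by
                  refine mul_le_mul hwjp ?_ zero_le zero_le
                  exact_mod_cast Nat.cast_le.mpr hcard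
              _ = 1 := by
                  rw [show ((b:ℝ≥0∞)+1) = ENNReal.ofReal ((b:ℝ)+1) by
                      rw [ENNReal.ofReal_add (by positivity) zero_le_one]; simp,
                    ← ENNReal.ofReal_mul (by positivity)]
                  rw [one_div, inv_mul_cancel₀ (by positivity)]
                  simp
        -- combine
        have hTB : (E.card : ℝ≥0∞) ≤ ((B.card : ℝ≥0∞) + 1) := by
          calc (E.card : ℝ≥0∞) ≤ ((insert e B).card : ℝ≥0∞) := by
                exact_mod_cast Finset.card_image_le
            _ ≤ ((B.card : ℝ≥0∞) + 1) := by
                exact_mod_cast Finset.card_insert_le _ _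
        calc ENNReal.ofReal (w d p φ j) * localSum d p j m (lamF A)
            = (ENNReal.ofReal (w d p φ j) ^ p *
                (∑' k : {k : Fin d → ℤ // inCube d j m k},
                  ENNReal.ofReal ‖lamF A k.1‖ ^ p)) ^ (1/p) := by
              rw [ENNReal.mul_rpow_of_nonneg _ _ (by positivity), ← ENNReal.rpow_mul,
                mul_one_div, div_self hp.ne', ENNReal.rpow_one, localSum]
          _ ≤ (2 : ℝ≥0∞) ^ (1/p) := by
              refine ENNReal.rpow_le_rpow ?_ (by positivity)
              calc ENNReal.ofReal (w d p φ j) ^ p * _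
                  ≤ ENNReal.ofReal (w d p φ j) ^ p * ((B.card : ℝ≥0∞) + 1) := by
                    exact mul_le_mul_right (le_trans hsum hTB) _
                _ = ENNReal.ofReal (w d p φ j) ^ p * (B.card : ℝ≥0∞) +
                      ENNReal.ofReal (w d p φ j) ^ p := by ring
                _ ≤ 1 + 1 := add_le_add hwB hwp1
                _ = 2 := one_add_one_eq_two
    calc mNorm d p φ (lamF A) ≤ (2 : ℝ≥0∞) ^ (1/p) := iSup₂_le key
      _ < ⊤ := ENNReal.rpow_lt_top_of_nonneg (by positivity) (by norm_num)
  · -- separation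
    intro A B hAB
    have : ∃ n, (n ∈ A ∧ n ∉ B) ∨ (n ∈ B ∧ n ∉ A) := by
      by_contra h
      push_neg at h
      exact hAB (Set.ext fun n => ⟨(h n).1, (h n).2⟩)
    obtain ⟨n, hn⟩ := this
    have hval : ∀ (X Y : Set ℕ), n ∈ X → n ∉ Y → ‖(lamF X - lamF Y) (pt n)‖ = 1 := by
      intro X Y hX hY
      have h1 : lamF X (pt n) = 1 := Set.indicator_of_mem (Set.mem_image_of_mem pt hX) _
      have h2 : lamF Y (pt n) = 0 := by
        apply Set.indicator_of_notMem
        rintro ⟨n', hn', he⟩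
        exact hY (hptinj he ▸ hn')
      simp [Pi.sub_apply, h1, h2]
    rcases hn with ⟨h1, h2⟩ | ⟨h1, h2⟩
    · exact ⟨pt n, hval A B h1 h2⟩
    · refine ⟨pt n, ?_⟩
      rw [show lamF A - lamF B = -(lamF B - lamF A) by ring, Pi.neg_apply, norm_neg]
      exact hval B A h1 h2
section sep
variable {d : ℕ} {p : ℝ} {φ : ℕ → ℝ}

lemma exists_box {d : ℕ} (s : Finset (Fin d → ℤ)) :
    ∃ j : ℕ, ∀ k ∈ s, ∀ i, -(2:ℤ)^j < k i ∧ k i < 2^j := by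
  classical
  obtain ⟨t, ht⟩ : ∃ t : ℕ, t = s.sup (fun k => Finset.univ.sup (fun i => (k i).natAbs)) :=
    ⟨_, rfl⟩
  refine ⟨t + 1, fun k hk i => ?_⟩
  have h1 : (k i).natAbs ≤ t := by
    rw [ht]
    refine le_trans (Finset.le_sup (f := fun i => (k i).natAbs) (Finset.mem_univ i)) ?_
    exact Finset.le_sup (f := fun k => Finset.univ.sup (fun i => (k i).natAbs)) hk
  have h2 : t < 2^(t+1) := lt_of_lt_of_le (Nat.lt_two_pow_self)
    (Nat.pow_le_pow_right (by norm_num) (Nat.le_succ t))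
  have h3 : ((k i).natAbs : ℤ) < (2:ℤ)^(t+1) := by exact_mod_cast lt_of_le_of_lt h1 h2
  clear ht
  omega

def mbFun (d : ℕ) : (Fin d → Bool) → (Fin d → ℤ) := fun b i => if b i then 0 else -1
def gFun (d : ℕ) : (Fin d → ℤ) → (Fin d → Bool) := fun k i => decide (0 ≤ k i)

lemma finsum_le_tsum_subtype {C : Set (Fin d → ℤ)} {t : Finset (Fin d → ℤ)}
    (h : ∀ k ∈ t, k ∈ C) (f : (Fin d → ℤ) → ℝ≥0∞) :
    ∑ k ∈ t, f k ≤ ∑' x : C, f x.1 := by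
  rw [tsum_subtype C f]
  calc ∑ k ∈ t, f k = ∑ k ∈ t, C.indicator f k :=
        Finset.sum_congr rfl fun k hk => (Set.indicator_of_mem (h k hk) f).symm
    _ ≤ ∑' k, C.indicator f k := ENNReal.sum_le_tsum t

lemma sum_lt_top (hd : 0 < d) (hp : 0 < p) (hGp : Gp d p φ) (hφ1 : φ 0 = 1)
    {c : ℝ} (hc0 : 0 < c) (hc : ∀ k, c ≤ w d p φ k)
    {lam : (Fin d → ℤ) → ℂ} (hm : mNorm d p φ lam < ⊤) :
    (∑' k : Fin d → ℤ, ENNReal.ofReal ‖lam k‖ ^ p) < ⊤ := by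
  classical
  set L : ℝ≥0∞ := ((ENNReal.ofReal c)⁻¹ * mNorm d p φ lam) ^ p with hL
  have hLlt : L < ⊤ := by
    refine ENNReal.rpow_lt_top_of_nonneg hp.le ?_
    exact (ENNReal.mul_lt_top (ENNReal.inv_lt_top.mpr (by simp [hc0])) hm).ne
  have hloc : ∀ (j : ℕ) (m : Fin d → ℤ),
      localSum d p j m lam ≤ (ENNReal.ofReal c)⁻¹ * mNorm d p φ lam := by
    intro j m
    have h1 : ENNReal.ofReal c * localSum d p j m lam ≤ mNorm d p φ lam := by
      refine le_trans ?_ (term_le_mNorm j m)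
      rw [wE_eq d p φ j hGp.1]
      exact mul_le_mul_left (ENNReal.ofReal_le_ofReal (hc j)) _
    have hcne : (ENNReal.ofReal c) ≠ 0 := by simp [hc0]
    calc localSum d p j m lam
        = (ENNReal.ofReal c)⁻¹ * (ENNReal.ofReal c * localSum d p j m lam) := by
          rw [← mul_assoc, ENNReal.inv_mul_cancel hcne ENNReal.ofReal_ne_top, one_mul]
      _ ≤ _ := mul_le_mul_right h1 _
  have hbound : ∀ s : Finset (Fin d → ℤ),
      ∑ k ∈ s, ENNReal.ofReal ‖lam k‖ ^ p ≤ (Fintype.card (Fin d → Bool)) • L := by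
    intro s
    obtain ⟨j, hbnd⟩ := exists_box s
    set g := gFun d with hg
    set mb := mbFun d with hmb
    have hcover : ∀ k ∈ s, inCube d j (mb (g k)) k := by
      intro k hk i
      rcases hbnd k hk i with ⟨hlo, hhi⟩
      by_cases h0 : 0 ≤ k i
      · have hb : mb (g k) i = 0 := by simp [hmb, hg, mbFun, gFun, h0]
        rw [hb]
        refine ⟨by simpa using h0, by simpa using hhi⟩
      · have hb : mb (g k) i = -1 := by simp [hmb, hg, mbFun, gFun, h0]
        rw [hb]
        have e1 : (2:ℤ)^j * (-1) = -(2^j) := by ring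
        have e2 : (2:ℤ)^j * (-1 + 1) = 0 := by ring
        constructor
        · rw [e1]; omega
        · rw [e2]; omega
    calc ∑ k ∈ s, ENNReal.ofReal ‖lam k‖ ^ p
        = ∑ b : Fin d → Bool, ∑ k ∈ s.filter (fun k => g k = b),
            ENNReal.ofReal ‖lam k‖ ^ p := (Finset.sum_fiberwise s g _).symm
      _ ≤ ∑ _b : Fin d → Bool, L := by
          refine Finset.sum_le_sum fun b _ => ?_
          have hsub : ∀ k ∈ s.filter (fun k => g k = b), k ∈ {k | inCube d j (mb b) k} := by
            intro k hk
            rcases Finset.mem_filter.mp hk with ⟨hks, hgb⟩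
            exact hgb ▸ hcover k hks
          calc ∑ k ∈ s.filter (fun k => g k = b), ENNReal.ofReal ‖lam k‖ ^ p
              ≤ ∑' x : {k | inCube d j (mb b) k}, ENNReal.ofReal ‖lam x.1‖ ^ p :=
                finsum_le_tsum_subtype hsub _
            _ = (localSum d p j (mb b) lam) ^ p := by
                rw [localSum, ← ENNReal.rpow_mul, one_div, inv_mul_cancel₀ hp.ne',
                  ENNReal.rpow_one]
                rfl
            _ ≤ L := ENNReal.rpow_le_rpow (hloc j (mb b)) hp.le
      _ = (Fintype.card (Fin d → Bool)) • L := by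
          rw [Finset.sum_const, Finset.card_univ]
  calc (∑' k : Fin d → ℤ, ENNReal.ofReal ‖lam k‖ ^ p)
      = ⨆ s : Finset (Fin d → ℤ), ∑ k ∈ s, ENNReal.ofReal ‖lam k‖ ^ p :=
        ENNReal.tsum_eq_iSup_sum
    _ ≤ (Fintype.card (Fin d → Bool)) • L := iSup_le hbound
    _ < ⊤ := by
        rw [nsmul_eq_mul]
        exact ENNReal.mul_lt_top (ENNReal.natCast_lt_top _) hLlt
end sep

section sep2
variable {d : ℕ} {p : ℝ} {φ : ℕ → ℝ}

def ratApprox (d : ℕ) (F : Finset (Fin d → ℤ)) (q : {k // k ∈ F} → ℚ × ℚ) :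
    (Fin d → ℤ) → ℂ :=
  fun k => if h : k ∈ F then (((q ⟨k, h⟩).1 : ℝ) : ℂ) + ((q ⟨k, h⟩).2 : ℝ) * Complex.I else 0

def Sset (d : ℕ) : Set ((Fin d → ℤ) → ℂ) :=
  ⋃ F : Finset (Fin d → ℤ), Set.range (ratApprox d F)

lemma Sset_countable (d : ℕ) : (Sset d).Countable :=
  Set.countable_iUnion fun F => Set.countable_range _

lemma rat_near (z : ℂ) {η : ℝ} (hη : 0 < η) :
    ∃ q : ℚ × ℚ, ‖z - ((((q.1 : ℝ) : ℂ)) + ((q.2 : ℝ) : ℂ) * Complex.I)‖ < η := by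
  obtain ⟨q1, hq1⟩ := exists_rat_near z.re (by positivity : (0:ℝ) < η/2)
  obtain ⟨q2, hq2⟩ := exists_rat_near z.im (by positivity : (0:ℝ) < η/2)
  refine ⟨(q1, q2), ?_⟩
  set zq : ℂ := (((q1 : ℝ) : ℂ)) + ((q2 : ℝ) : ℂ) * Complex.I with hzq
  have hre : (z - zq).re = z.re - q1 := by simp [hzq]
  have him : (z - zq).im = z.im - q2 := by simp [hzq]
  calc ‖z - zq‖ ≤ |(z - zq).re| + |(z - zq).im| := Complex.norm_le_abs_re_add_abs_im _
    _ < η := by rw [hre, him]; linarith [hq1, hq2]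

lemma ennreal_split {ι : Type*} (f : ι → ℝ≥0∞) (F : Finset ι) :
    ∑' k, f k = (∑ k ∈ F, f k) + ∑' k : ↑((F : Set ι)ᶜ), f k.1 := by
  classical
  have h1 : ∀ k, f k = (F : Set ι).indicator f k + ((F : Set ι)ᶜ).indicator f k := by
    intro k
    by_cases hk : k ∈ (F : Set ι)
    · rw [Set.indicator_of_mem hk, Set.indicator_of_notMem (by simpa using hk), add_zero]
    · rw [Set.indicator_of_notMem hk, Set.indicator_of_mem (by simpa using hk), zero_add]
  calc ∑' k, f k = ∑' k, ((F : Set ι).indicator f k + ((F : Set ι)ᶜ).indicator f k) :=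
        tsum_congr h1
    _ = (∑' k, (F : Set ι).indicator f k) + ∑' k, ((F : Set ι)ᶜ).indicator f k :=
        ENNReal.tsum_add
    _ = (∑ k ∈ F, f k) + ∑' k : ↑((F : Set ι)ᶜ), f k.1 := by
        congr 1
        · calc (∑' k, (F : Set ι).indicator f k)
              = ∑ k ∈ F, (F : Set ι).indicator f k :=
                tsum_eq_sum (fun k hk => Set.indicator_of_notMem (by simpa using hk) f)
            _ = ∑ k ∈ F, f k :=
                Finset.sum_congr rfl fun k hk => Set.indicator_of_mem (by simpa using hk) f
        · exact (tsum_subtype _ f).symm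

lemma tail_small {f : (Fin d → ℤ) → ℝ≥0∞} (hT : (∑' k, f k) ≠ ⊤) {δ : ℝ≥0∞}
    (hδ0 : 0 < δ) (hδt : δ ≠ ⊤) :
    ∃ F : Finset (Fin d → ℤ), (∑' k : ↑((F : Set (Fin d → ℤ))ᶜ), f k.1) < δ := by
  by_cases hsmall : (∑' k, f k) < δ
  · refine ⟨∅, lt_of_le_of_lt ?_ hsmall⟩
    rw [tsum_subtype]
    exact ENNReal.tsum_le_tsum fun k => Set.indicator_le_self _ _ k
  push_neg at hsmall
  have hT0 : (∑' k, f k) ≠ 0 := by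
    intro h0; rw [h0] at hsmall; exact (hδ0.trans_le hsmall).false
  have h1 : (∑' k, f k) - δ < ∑' k, f k := ENNReal.sub_lt_self hT hT0 hδ0.ne'
  rw [ENNReal.tsum_eq_iSup_sum] at h1
  obtain ⟨F, hF⟩ := lt_iSup_iff.mp h1
  rw [← ENNReal.tsum_eq_iSup_sum] at hF
  refine ⟨F, ?_⟩
  have hsplit : (∑ k ∈ F, f k) + (∑' k : ↑((F : Set (Fin d → ℤ))ᶜ), f k.1)
      = ∑' k, f k := (ennreal_split f F).symm
  have hFne : (∑ k ∈ F, f k) ≠ ⊤ := by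
    refine ne_top_of_le_ne_top hT ?_
    rw [← hsplit]; exact le_self_add
  have h2 : (∑' k, f k) < (∑ k ∈ F, f k) + δ :=
    (ENNReal.sub_lt_iff_lt_right hδt hsmall).mp hF
  rw [← hsplit] at h2
  exact (ENNReal.add_lt_add_iff_left hFne).mp h2

lemma approx (hd : 0 < d) (hp : 0 < p) (hGp : Gp d p φ) (hφ1 : φ 0 = 1)
    {c : ℝ} (hc0 : 0 < c) (hc : ∀ k, c ≤ w d p φ k)
    (lam : (Fin d → ℤ) → ℂ) (hm : mNorm d p φ lam < ⊤)
    (ε : ℝ≥0∞) (hε : 0 < ε) :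
    ∃ s ∈ Sset d, mNorm d p φ (lam - s) < ε := by
  classical
  set ε' : ℝ≥0∞ := min ε 1 with hε'
  have hε'0 : 0 < ε' := lt_min hε zero_lt_one
  have hε't : ε' ≠ ⊤ := ne_top_of_le_ne_top (by norm_num) (min_le_right _ _)
  have hε'ε : ε' ≤ ε := min_le_left _ _
  set β : ℝ≥0∞ := ε' ^ p with hβ
  have hβ0 : 0 < β := ENNReal.rpow_pos hε'0 hε't
  have hβt : β ≠ ⊤ := (ENNReal.rpow_lt_top_of_nonneg hp.le hε't).ne
  set δ : ℝ≥0∞ := β / 2 with hδ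
  have hδ0 : 0 < δ := ENNReal.div_pos hβ0.ne' (by norm_num)
  have hδt : δ ≠ ⊤ := by
    rw [hδ, ENNReal.div_eq_inv_mul]
    exact (ENNReal.mul_lt_top (by norm_num) hβt.lt_top).ne
  have hT : (∑' k : Fin d → ℤ, ENNReal.ofReal ‖lam k‖ ^ p) ≠ ⊤ :=
    (sum_lt_top hd hp hGp hφ1 hc0 hc hm).ne
  obtain ⟨F, hF⟩ := tail_small hT hδ0 hδt
  -- choose rationals
  set γ : ℝ≥0∞ := δ / (F.card + 1) with hγ
  have hγ0 : 0 < γ := ENNReal.div_pos hδ0.ne' (by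
    exact (ENNReal.add_lt_top.mpr ⟨ENNReal.natCast_lt_top _, by norm_num⟩).ne)
  have hγt : γ ≠ ⊤ := by
    rw [hγ, ENNReal.div_eq_inv_mul]
    refine (ENNReal.mul_lt_top ?_ hδt.lt_top).ne
    simp [ENNReal.inv_lt_top]
  set r : ℝ := γ.toReal with hr
  have hr0 : 0 < r := ENNReal.toReal_pos hγ0.ne' hγt
  set η : ℝ := r ^ (1/p) with hη
  have hη0 : 0 < η := Real.rpow_pos_of_pos hr0 _
  have hq : ∀ k : Fin d → ℤ, ∃ q : ℚ × ℚ,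
      ‖lam k - ((((q.1 : ℝ) : ℂ)) + ((q.2 : ℝ) : ℂ) * Complex.I)‖ < η :=
    fun k => rat_near (lam k) hη0
  choose qf hqf using hq
  set s : (Fin d → ℤ) → ℂ := ratApprox d F (fun k => qf k.1) with hs
  have hsS : s ∈ Sset d := Set.mem_iUnion.mpr ⟨F, Set.mem_range.mpr ⟨_, rfl⟩⟩
  refine ⟨s, hsS, ?_⟩
  -- the estimate
  set gfn : (Fin d → ℤ) → ℝ≥0∞ := fun k => ENNReal.ofReal ‖(lam - s) k‖ ^ p with hgfn
  have hsplit : (∑ k ∈ F, gfn k) + (∑' k : ↑((F : Set (Fin d → ℤ))ᶜ), gfn k.1)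
      = ∑' k, gfn k := (ennreal_split gfn F).symm
  have htail : (∑' k : ↑((F : Set (Fin d → ℤ))ᶜ), gfn k.1) < δ := by
    refine lt_of_le_of_lt (le_of_eq (tsum_congr fun x => ?_)) hF
    have hx : x.1 ∉ F := x.2
    have : s x.1 = 0 := dif_neg hx
    simp [hgfn, Pi.sub_apply, this]
  have hmain : (∑ k ∈ F, gfn k) ≤ δ := by
    have hterm : ∀ k ∈ F, gfn k ≤ γ := by
      intro k hk
      have hsk : s k = (((qf k).1 : ℝ) : ℂ) + (((qf k).2 : ℝ) : ℂ) * Complex.I := dif_pos hk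
      have hnm : ‖(lam - s) k‖ < η := by rw [Pi.sub_apply, hsk]; exact hqf k
      calc gfn k ≤ ENNReal.ofReal η ^ p := by
            exact ENNReal.rpow_le_rpow (ENNReal.ofReal_le_ofReal hnm.le) hp.le
        _ = ENNReal.ofReal (η ^ p) := ENNReal.ofReal_rpow_of_pos hη0
        _ = ENNReal.ofReal r := by
            rw [hη, ← Real.rpow_mul hr0.le, one_div, inv_mul_cancel₀ hp.ne', Real.rpow_one]
        _ = γ := ENNReal.ofReal_toReal hγt
    calc (∑ k ∈ F, gfn k) ≤ F.card • γ := Finset.sum_le_card_nsmul F gfn γ hterm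
      _ = (F.card : ℝ≥0∞) * γ := nsmul_eq_mul _ _
      _ ≤ ((F.card : ℝ≥0∞) + 1) * γ := mul_le_mul_left le_self_add _
      _ = δ := by
          rw [hγ, ENNReal.mul_div_cancel ?h1 ?h2]
          case h1 => simp
          case h2 => exact (ENNReal.add_lt_top.mpr ⟨ENNReal.natCast_lt_top _, by norm_num⟩).ne
  have hG : (∑' k, gfn k) < β := by
    rw [← hsplit]
    calc (∑ k ∈ F, gfn k) + (∑' k : ↑((F : Set (Fin d → ℤ))ᶜ), gfn k.1)
        ≤ δ + (∑' k : ↑((F : Set (Fin d → ℤ))ᶜ), gfn k.1) := add_le_add_left hmain _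
      _ < δ + δ := ENNReal.add_lt_add_left hδt htail
      _ = β := by rw [hδ, ENNReal.add_halves]
  calc mNorm d p φ (lam - s) ≤ ellpNorm d p (lam - s) := mNorm_le_ellp hp hGp hφ1
    _ = (∑' k, gfn k) ^ (1/p) := rfl
    _ < β ^ (1/p) := ENNReal.rpow_lt_rpow hG (by positivity)
    _ = ε' := by rw [hβ, rpowRpowInv hp.ne']
    _ ≤ ε := hε'ε
end sep2

lemma uncount {α : Type*} [Countable α] (f : Set ℕ → α) (hf : Function.Injective f) : False := by
  have h1 : Countable (Set ℕ) := hf.countable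
  obtain ⟨g, hg⟩ := h1.exists_injective_nat
  exact Function.cantor_injective g hg

end aux

theorem stmt_11 (d : ℕ) (hd : 0 < d) (p : ℝ) (hp : 0 < p)
    (φ : ℕ → ℝ) (hGp : Gp d p φ) (hφ1 : φ 0 = 1)
    (hunb : ∀ C : ℝ, ∃ k, C < φ k) :
    ((∃ S : Set ((Fin d → ℤ) → ℂ), S.Countable ∧
        ∀ lam : (Fin d → ℤ) → ℂ, mNorm d p φ lam < ⊤ →
          ∀ ε : ℝ≥0∞, 0 < ε → ∃ s ∈ S, mNorm d p φ (lam - s) < ε) ↔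
      (∃ c : ℝ, 0 < c ∧ ∀ k : ℕ, c ≤ φ k * (2 : ℝ) ^ (-((k : ℝ) * d) / p))) ∧
    (Tendsto (fun k : ℕ => φ k * (2 : ℝ) ^ (-((k : ℝ) * d) / p))
        atTop (nhds 0) →
      ∃ F : Set ((Fin d → ℤ) → ℂ), ¬ F.Countable ∧
        (∀ lam ∈ F, mNorm d p φ lam < ⊤) ∧
        ∀ lam ∈ F, ∀ mu ∈ F, lam ≠ mu → 1 ≤ mNorm d p φ (lam - mu)) := by
  classical
  have hweq : (fun k : ℕ => φ k * (2 : ℝ) ^ (-((k : ℝ) * d) / p)) = w d p φ := rfl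
  constructor
  · constructor
    · -- separable → positive limit
      rintro ⟨S, hSc, hS⟩
      by_contra hnc
      push_neg at hnc
      have hpos : ∀ j, 0 < w d p φ j := w_pos d p φ hGp.1
      have hbdd : BddBelow (Set.range (w d p φ)) := by
        refine ⟨0, ?_⟩
        rintro x ⟨j, rfl⟩
        exact (hpos j).le
      have hiInf : ⨅ j, w d p φ j = 0 := by
        by_contra hL
        have hL0 : 0 < ⨅ j, w d p φ j :=
          lt_of_le_of_ne (le_ciInf fun j => (hpos j).le) (Ne.symm hL)
        obtain ⟨k, hk⟩ := hnc _ hL0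
        exact absurd (ciInf_le hbdd k) (not_le.mpr hk)
      have htd : Tendsto (w d p φ) atTop (nhds 0) := by
        have := tendsto_atTop_ciInf (w_antitone d p φ hGp) hbdd
        rwa [hiInf] at this
      obtain ⟨lamF, hfin, hsep⟩ := construction d hd p hp φ hGp hφ1 htd
      have hhalf : (0:ℝ≥0∞) < 2⁻¹ := by simp
      have hch : ∀ A : Set ℕ, ∃ s ∈ S, mNorm d p φ (lamF A - s) < 2⁻¹ :=
        fun A => hS (lamF A) (hfin A) _ hhalf
      choose sf hsfS hsf using hch
      haveI := hSc.to_subtype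
      refine uncount (fun A => (⟨sf A, hsfS A⟩ : ↥S)) ?_
      intro A B hAB'
      have hAB : sf A = sf B := congrArg Subtype.val hAB'
      by_contra hne
      obtain ⟨k, hk⟩ := hsep A B hne
      have h1 : (1:ℝ≥0∞) = ENNReal.ofReal ‖(lamF A - lamF B) k‖ := by rw [hk]; simp
      have h2 : ‖(lamF A - lamF B) k‖ ≤ ‖(lamF A - sf A) k‖ + ‖(lamF B - sf B) k‖ := by
        have e : (lamF A - lamF B) k = (lamF A - sf A) k - ((lamF B - sf B) k) := by
          simp only [Pi.sub_apply, congrFun hAB k]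
          ring
        rw [e]
        exact norm_sub_le _ _
      have h3 : ENNReal.ofReal ‖(lamF A - lamF B) k‖
          ≤ mNorm d p φ (lamF A - sf A) + mNorm d p φ (lamF B - sf B) :=
        calc ENNReal.ofReal ‖(lamF A - lamF B) k‖
            ≤ ENNReal.ofReal (‖(lamF A - sf A) k‖ + ‖(lamF B - sf B) k‖) :=
              ENNReal.ofReal_le_ofReal h2
          _ ≤ ENNReal.ofReal ‖(lamF A - sf A) k‖ + ENNReal.ofReal ‖(lamF B - sf B) k‖ :=
              ENNReal.ofReal_add_le
          _ ≤ _ := add_le_add (norm_le_mNorm hp hφ1 k) (norm_le_mNorm hp hφ1 k)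
      have h4 : mNorm d p φ (lamF A - sf A) + mNorm d p φ (lamF B - sf B)
          < 2⁻¹ + 2⁻¹ := ENNReal.add_lt_add (hsf A) (hsf B)
      rw [ENNReal.inv_two_add_inv_two] at h4
      exact absurd (h1 ▸ h3) (not_le.mpr h4)
    · -- positive limit → separable
      rintro ⟨c, hc0, hc⟩
      exact ⟨Sset d, Sset_countable d,
        fun lam hm ε hε => approx hd hp hGp hφ1 hc0 hc lam hm ε hε⟩
  · -- part 2
    intro htend
    rw [hweq] at htend
    obtain ⟨lamF, hfin, hsep⟩ := construction d hd p hp φ hGp hφ1 htend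
    have hinj : Function.Injective lamF := by
      intro A B hAB
      by_contra hne
      obtain ⟨k, hk⟩ := hsep A B hne
      rw [hAB] at hk
      simp at hk
    refine ⟨Set.range lamF, ?_, ?_, ?_⟩
    · intro hcnt
      haveI := hcnt.to_subtype
      exact uncount (fun A => (⟨lamF A, Set.mem_range_self A⟩ : ↥(Set.range lamF)))
        (fun A B h => hinj (congrArg Subtype.val h))
    · rintro lam ⟨A, rfl⟩; exact hfin A
    · rintro lam ⟨A, rfl⟩ mu ⟨B, rfl⟩ hne
      obtain ⟨k, hk⟩ := hsep A B (fun h => hne (congrArg lamF h))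
      calc (1:ℝ≥0∞) = ENNReal.ofReal ‖(lamF A - lamF B) k‖ := by rw [hk]; simp
        _ ≤ mNorm d p φ (lamF A - lamF B) := norm_le_mNorm hp hφ1 k
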